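/- For any constants h > 0, ω > 0, B > 0 and any real Q, the superlevel set {(x, S) ∈ ℝ² : x > 0, S ≥ 0, and (B/2) · x · log₂(1 + (S·h)/(x·ω)) ≥ Q} is a convex subset of ℝ². -/

import Mathlib

open Real

lemma pos_comb {t1 t2 a b : ℝ} (ht1 : 0 < t1) (ht2 : 0 < t2)
    (ha : 0 ≤ a) (hb : 0 ≤ b) (hab : a + b = 1) : 0 < a * t1 + b * t2 := by
  have hm : 0 < min t1 t2 := lt_min ht1 ht2
  calc (0:ℝ) < min t1 t2 := hm
    _ = (a + b) * min t1 t2 := by rw [hab, one_mul]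
    _ ≤ a * t1 + b * t2 := by
        rw [add_mul]
        exact add_le_add (mul_le_mul_of_nonneg_left (min_le_left _ _) ha)
          (mul_le_mul_of_nonneg_left (min_le_right _ _) hb)

lemma key_concave (t1 t2 s1 s2 a b : ℝ) (ht1 : 0 < t1) (ht2 : 0 < t2)
    (hs1 : 0 ≤ s1) (hs2 : 0 ≤ s2) (ha : 0 ≤ a) (hb : 0 ≤ b) (hab : a + b = 1) :
    a * (t1 * Real.log (1 + s1 / t1)) + b * (t2 * Real.log (1 + s2 / t2)) ≤
      (a * t1 + b * t2) * Real.log (1 + (a * s1 + b * s2) / (a * t1 + b * t2)) := by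
  have hT : 0 < a * t1 + b * t2 := pos_comb ht1 ht2 ha hb hab
  set T := a * t1 + b * t2 with hTdef
  have hr1 : (1 + s1 / t1) ∈ Set.Ioi (0 : ℝ) := by
    have : 0 ≤ s1 / t1 := div_nonneg hs1 ht1.le
    simp [Set.mem_Ioi]; linarith
  have hr2 : (1 + s2 / t2) ∈ Set.Ioi (0 : ℝ) := by
    have : 0 ≤ s2 / t2 := div_nonneg hs2 ht2.le
    simp [Set.mem_Ioi]; linarith
  have hl : 0 ≤ a * t1 / T := by positivity
  have hm2 : 0 ≤ b * t2 / T := by positivity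
  have hsum : a * t1 / T + b * t2 / T = 1 := by field_simp; exact hTdef.symm
  have hconc := (strictConcaveOn_log_Ioi.concaveOn).2 hr1 hr2 hl hm2 hsum
  have harg : (a * t1 / T) • (1 + s1 / t1) + (b * t2 / T) • (1 + s2 / t2)
      = 1 + (a * s1 + b * s2) / T := by
    have hT0 : T ≠ 0 := hT.ne'
    simp only [smul_eq_mul]
    field_simp
    ring
  rw [harg] at hconc
  have := mul_le_mul_of_nonneg_left hconc hT.le
  calc a * (t1 * Real.log (1 + s1 / t1)) + b * (t2 * Real.log (1 + s2 / t2))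
      = T * ((a * t1 / T) • Real.log (1 + s1 / t1) + (b * t2 / T) • Real.log (1 + s2 / t2)) := by
        have hT0 : T ≠ 0 := hT.ne'
        simp only [smul_eq_mul]
        field_simp
    _ ≤ T * Real.log (1 + (a * s1 + b * s2) / T) := this

/-- For constants h > 0, ω > 0, B > 0 and any real Q, the superlevel set
{(x, S) : x > 0, S ≥ 0, (B/2)·x·log₂(1 + S·h/(x·ω)) ≥ Q} is convex. -/
theorem stmt_1 (h ω B Q : ℝ) (hh : 0 < h) (hω : 0 < ω) (hB : 0 < B) :
    Convex ℝ {p : ℝ × ℝ | 0 < p.1 ∧ 0 ≤ p.2 ∧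
      Q ≤ B / 2 * p.1 * Real.logb 2 (1 + p.2 * h / (p.1 * ω))} := by
  intro p hp q hq a b ha hb hab
  obtain ⟨hp1, hp2, hpQ⟩ := hp
  obtain ⟨hq1, hq2, hqQ⟩ := hq
  have hT : 0 < a * p.1 + b * q.1 := pos_comb hp1 hq1 ha hb hab
  refine ⟨hT, add_nonneg (mul_nonneg ha hp2) (mul_nonneg hb hq2), ?_⟩
  have hlog2 : 0 < Real.log 2 := Real.log_pos one_lt_two
  -- rewrite arguments
  have hrw : ∀ x S : ℝ, 0 < x → 1 + S * h / (x * ω) = 1 + (S * h / ω) / x := by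
    intro x S hx
    rw [div_div, mul_comm ω x]
  have key := key_concave p.1 q.1 (p.2 * h / ω) (q.2 * h / ω) a b hp1 hq1
    (by positivity) (by positivity) ha hb hab
  have hcomb : (a * (p.2 * h / ω) + b * (q.2 * h / ω)) = (a * p.2 + b * q.2) * h / ω := by
    ring
  rw [hcomb] at key
  -- turn logb into log
  have hlb : ∀ x S : ℝ, 0 < x →
      B / 2 * x * Real.logb 2 (1 + S * h / (x * ω))
        = (B / (2 * Real.log 2)) * (x * Real.log (1 + (S * h / ω) / x)) := by
    intro x S hx
    rw [Real.logb, hrw x S hx]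
    field_simp
  have hc : 0 < B / (2 * Real.log 2) := by positivity
  have h1 := hpQ; rw [hlb p.1 p.2 hp1] at h1
  have h2 := hqQ; rw [hlb q.1 q.2 hq1] at h2
  show Q ≤ B / 2 * (a • p + b • q).1 * Real.logb 2
      (1 + (a • p + b • q).2 * h / ((a • p + b • q).1 * ω))
  have hfst : (a • p + b • q).1 = a * p.1 + b * q.1 := rfl
  have hsnd : (a • p + b • q).2 = a * p.2 + b * q.2 := rfl
  rw [hfst, hsnd, hlb _ _ hT]
  have step : Q ≤ (B / (2 * Real.log 2)) *
      (a * (p.1 * Real.log (1 + (p.2 * h / ω) / p.1)) +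
       b * (q.1 * Real.log (1 + (q.2 * h / ω) / q.1))) := by
    have := add_le_add (mul_le_mul_of_nonneg_left h1 ha) (mul_le_mul_of_nonneg_left h2 hb)
    calc Q = a * Q + b * Q := by rw [← add_mul, hab]; ring
      _ ≤ _ := this
      _ = _ := by ring
  exact step.trans (mul_le_mul_of_nonneg_left key hc.le)
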